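/- Fix an integer a and let A₁ = [[1,a,0,0],[0,−1,0,0],[0,0,0,−1],[0,0,1,−2]] and A₂ = [[−1,0,0,0],[0,−1,0,0],[0,0,1,0],[0,0,0,1]], both elements of GL(4,ℤ). Then: (i) A₁·A₂ = A₂·A₁; (ii) 1 is an eigenvalue of A₁^n·A₂^m for every (n,m) ∈ ℤ²; (iii) the only k ∈ ℤ⁴ with A₁·k = k and A₂·k = k is k = 0; and (iv) A₁ has infinite order in GL(4,ℤ), so the subgroup generated by A₁ and A₂ is not isomorphic to the Klein four-group. -/

import Mathlib

open Matrix

private lemma det_zero_aux (X : Matrix (Fin 4) (Fin 4) ℤ) (v : Fin 4 → ℤ) (hv : v ≠ 0)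
    (h : X.mulVec v = v) : (X - 1).det = 0 :=
  Matrix.exists_mulVec_eq_zero_iff.mp
    ⟨v, hv, by rw [sub_mulVec, one_mulVec, h, sub_self]⟩

private lemma fix_zpow (u : GL (Fin 4) ℤ) (v : Fin 4 → ℤ)
    (h : (u : Matrix (Fin 4) (Fin 4) ℤ).mulVec v = v) (n : ℤ) :
    ((u ^ n : GL (Fin 4) ℤ) : Matrix (Fin 4) (Fin 4) ℤ).mulVec v = v := by
  have hinv : ((u⁻¹ : GL (Fin 4) ℤ) : Matrix (Fin 4) (Fin 4) ℤ).mulVec v = v := by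
    conv_lhs => rw [← h]
    rw [mulVec_mulVec, ← Units.val_mul, inv_mul_cancel, Units.val_one, one_mulVec]
  induction n using Int.induction_on with
  | zero => simp
  | succ k ih => rw [_root_.zpow_add_one, Units.val_mul, ← mulVec_mulVec, h, ih]
  | pred k ih => rw [_root_.zpow_sub_one, Units.val_mul, ← mulVec_mulVec, hinv, ih]

private lemma negfix_even (u : GL (Fin 4) ℤ) (v : Fin 4 → ℤ)
    (h : (u : Matrix (Fin 4) (Fin 4) ℤ).mulVec v = -v) (p : ℤ) :
    ((u ^ (p + p) : GL (Fin 4) ℤ) : Matrix (Fin 4) (Fin 4) ℤ).mulVec v = v := by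
  have h2 : ((u * u : GL (Fin 4) ℤ) : Matrix (Fin 4) (Fin 4) ℤ).mulVec v = v := by
    rw [Units.val_mul, ← mulVec_mulVec, h, mulVec_neg, h, neg_neg]
  have huu : u ^ (p + p) = (u * u) ^ p := by
    rw [← two_mul, _root_.zpow_mul, zpow_two]
  rw [huu]; exact fix_zpow _ _ h2 p

private lemma negfix_odd (u : GL (Fin 4) ℤ) (v : Fin 4 → ℤ)
    (h : (u : Matrix (Fin 4) (Fin 4) ℤ).mulVec v = -v) (p : ℤ) :
    ((u ^ (2 * p + 1) : GL (Fin 4) ℤ) : Matrix (Fin 4) (Fin 4) ℤ).mulVec v = -v := by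
  rw [_root_.zpow_add_one, Units.val_mul, ← mulVec_mulVec, h, mulVec_neg, two_mul,
    negfix_even u v h p]

private lemma pow_entry (u : GL (Fin 4) ℤ)
    (hc : ∀ x y : ℤ, (u : Matrix (Fin 4) (Fin 4) ℤ).mulVec ![0, 0, x, y] = ![0, 0, -y, x - 2 * y])
    (n : ℕ) :
    ((u ^ n : GL (Fin 4) ℤ) : Matrix (Fin 4) (Fin 4) ℤ).mulVec ![0, 0, 1, 0] =
      ![0, 0, (-1) ^ n * (1 - (n : ℤ)), (-1) ^ n * (-(n : ℤ))] := by
  induction n with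
  | zero => funext i; fin_cases i <;> simp
  | succ k ih =>
      rw [_root_.pow_succ', Units.val_mul, ← mulVec_mulVec, ih, hc]
      funext i
      fin_cases i <;> simp <;> push_cast <;> ring

set_option maxHeartbeats 4000000 in
theorem four_dim_counterexample (a : ℤ) :
    ∃ A₁ A₂ : GL (Fin 4) ℤ,
      (A₁ : Matrix (Fin 4) (Fin 4) ℤ) =
        !![1, a, 0, 0; 0, -1, 0, 0; 0, 0, 0, -1; 0, 0, 1, -2] ∧
      (A₂ : Matrix (Fin 4) (Fin 4) ℤ) =
        !![-1, 0, 0, 0; 0, -1, 0, 0; 0, 0, 1, 0; 0, 0, 0, 1] ∧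
      A₁ * A₂ = A₂ * A₁ ∧
      (∀ n m : ℤ, (((A₁ ^ n * A₂ ^ m : GL (Fin 4) ℤ) :
        Matrix (Fin 4) (Fin 4) ℤ) - 1).det = 0) ∧
      (∀ k : Fin 4 → ℤ,
        (A₁ : Matrix (Fin 4) (Fin 4) ℤ).mulVec k = k →
        (A₂ : Matrix (Fin 4) (Fin 4) ℤ).mulVec k = k → k = 0) ∧
      ¬ IsOfFinOrder A₁ ∧
      IsEmpty (↥(Subgroup.closure {A₁, A₂} : Subgroup (GL (Fin 4) ℤ)) ≃*
        Multiplicative (ZMod 2) × Multiplicative (ZMod 2)) := by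
  have hMMi :
      (!![1, a, 0, 0; 0, -1, 0, 0; 0, 0, 0, -1; 0, 0, 1, -2] : Matrix (Fin 4) (Fin 4) ℤ) *
      !![1, a, 0, 0; 0, -1, 0, 0; 0, 0, -2, 1; 0, 0, -1, 0] = 1 := by
    ext i j
    fin_cases i <;> fin_cases j <;>
      simp [Matrix.mul_apply, Fin.sum_univ_four, Matrix.one_apply,
        Matrix.vecHead, Matrix.vecTail]
  have hMiM :
      (!![1, a, 0, 0; 0, -1, 0, 0; 0, 0, -2, 1; 0, 0, -1, 0] : Matrix (Fin 4) (Fin 4) ℤ) *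
      !![1, a, 0, 0; 0, -1, 0, 0; 0, 0, 0, -1; 0, 0, 1, -2] = 1 := by
    ext i j
    fin_cases i <;> fin_cases j <;>
      simp [Matrix.mul_apply, Fin.sum_univ_four, Matrix.one_apply,
        Matrix.vecHead, Matrix.vecTail]
  have hNN :
      (!![-1, 0, 0, 0; 0, -1, 0, 0; 0, 0, 1, 0; 0, 0, 0, 1] : Matrix (Fin 4) (Fin 4) ℤ) *
      !![-1, 0, 0, 0; 0, -1, 0, 0; 0, 0, 1, 0; 0, 0, 0, 1] = 1 := by
    ext i j
    fin_cases i <;> fin_cases j <;>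
      simp [Matrix.mul_apply, Fin.sum_univ_four, Matrix.one_apply,
        Matrix.vecHead, Matrix.vecTail]
  let U₁ : GL (Fin 4) ℤ :=
    ⟨!![1, a, 0, 0; 0, -1, 0, 0; 0, 0, 0, -1; 0, 0, 1, -2],
     !![1, a, 0, 0; 0, -1, 0, 0; 0, 0, -2, 1; 0, 0, -1, 0], hMMi, hMiM⟩
  let U₂ : GL (Fin 4) ℤ :=
    ⟨!![-1, 0, 0, 0; 0, -1, 0, 0; 0, 0, 1, 0; 0, 0, 0, 1],
     !![-1, 0, 0, 0; 0, -1, 0, 0; 0, 0, 1, 0; 0, 0, 0, 1], hNN, hNN⟩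
  -- eigenvector facts
  have f1 : (U₁ : Matrix (Fin 4) (Fin 4) ℤ).mulVec ![1, 0, 0, 0] = ![1, 0, 0, 0] := by
    show (!![1, a, 0, 0; 0, -1, 0, 0; 0, 0, 0, -1; 0, 0, 1, -2] :
      Matrix (Fin 4) (Fin 4) ℤ).mulVec ![1, 0, 0, 0] = ![1, 0, 0, 0]
    funext i
    fin_cases i <;> simp [Matrix.mulVec, dotProduct, Fin.sum_univ_four]
  have f2 : (U₂ : Matrix (Fin 4) (Fin 4) ℤ).mulVec ![1, 0, 0, 0] = -![1, 0, 0, 0] := by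
    show (!![-1, 0, 0, 0; 0, -1, 0, 0; 0, 0, 1, 0; 0, 0, 0, 1] :
      Matrix (Fin 4) (Fin 4) ℤ).mulVec ![1, 0, 0, 0] = -![1, 0, 0, 0]
    funext i
    fin_cases i <;> simp [Matrix.mulVec, dotProduct, Fin.sum_univ_four]
  have g1 : (U₁ : Matrix (Fin 4) (Fin 4) ℤ).mulVec ![0, 0, 1, 1] = -![0, 0, 1, 1] := by
    show (!![1, a, 0, 0; 0, -1, 0, 0; 0, 0, 0, -1; 0, 0, 1, -2] :
      Matrix (Fin 4) (Fin 4) ℤ).mulVec ![0, 0, 1, 1] = -![0, 0, 1, 1]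
    funext i
    fin_cases i <;> simp [Matrix.mulVec, dotProduct, Fin.sum_univ_four]
  have g2 : (U₂ : Matrix (Fin 4) (Fin 4) ℤ).mulVec ![0, 0, 1, 1] = ![0, 0, 1, 1] := by
    show (!![-1, 0, 0, 0; 0, -1, 0, 0; 0, 0, 1, 0; 0, 0, 0, 1] :
      Matrix (Fin 4) (Fin 4) ℤ).mulVec ![0, 0, 1, 1] = ![0, 0, 1, 1]
    funext i
    fin_cases i <;> simp [Matrix.mulVec, dotProduct, Fin.sum_univ_four]
  have e1 : (U₁ : Matrix (Fin 4) (Fin 4) ℤ).mulVec ![a, -2, 0, 0] = -![a, -2, 0, 0] := by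
    show (!![1, a, 0, 0; 0, -1, 0, 0; 0, 0, 0, -1; 0, 0, 1, -2] :
      Matrix (Fin 4) (Fin 4) ℤ).mulVec ![a, -2, 0, 0] = -![a, -2, 0, 0]
    funext i
    fin_cases i <;> simp [Matrix.mulVec, dotProduct, Fin.sum_univ_four] <;> ring
  have e2 : (U₂ : Matrix (Fin 4) (Fin 4) ℤ).mulVec ![a, -2, 0, 0] = -![a, -2, 0, 0] := by
    show (!![-1, 0, 0, 0; 0, -1, 0, 0; 0, 0, 1, 0; 0, 0, 0, 1] :
      Matrix (Fin 4) (Fin 4) ℤ).mulVec ![a, -2, 0, 0] = -![a, -2, 0, 0]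
    funext i
    fin_cases i <;> simp [Matrix.mulVec, dotProduct, Fin.sum_univ_four]
  have hc : ∀ x y : ℤ,
      (U₁ : Matrix (Fin 4) (Fin 4) ℤ).mulVec ![0, 0, x, y] = ![0, 0, -y, x - 2 * y] := by
    intro x y
    show (!![1, a, 0, 0; 0, -1, 0, 0; 0, 0, 0, -1; 0, 0, 1, -2] :
      Matrix (Fin 4) (Fin 4) ℤ).mulVec ![0, 0, x, y] = ![0, 0, -y, x - 2 * y]
    funext i
    fin_cases i <;> simp [Matrix.mulVec, dotProduct, Fin.sum_univ_four] <;> ring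
  have hfin : ¬ IsOfFinOrder U₁ := by
    rw [isOfFinOrder_iff_pow_eq_one]
    rintro ⟨n, hn, hpow⟩
    have h := pow_entry U₁ hc n
    rw [hpow, Units.val_one, one_mulVec] at h
    have h3 : (0 : ℤ) = (-1) ^ n * (-(n : ℤ)) := congrFun h 3
    have h4 : ((-1 : ℤ)) ^ n * (-(n : ℤ)) = 0 := h3.symm
    rcases mul_eq_zero.mp h4 with h5 | h5
    · exact pow_ne_zero n (by norm_num) h5
    · omega
  refine ⟨U₁, U₂, rfl, rfl, ?_, ?_, ?_, hfin, ?_⟩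
  · -- commuting
    apply Units.ext
    rw [Units.val_mul, Units.val_mul]
    show (!![1, a, 0, 0; 0, -1, 0, 0; 0, 0, 0, -1; 0, 0, 1, -2] : Matrix (Fin 4) (Fin 4) ℤ) *
        !![-1, 0, 0, 0; 0, -1, 0, 0; 0, 0, 1, 0; 0, 0, 0, 1] =
      !![-1, 0, 0, 0; 0, -1, 0, 0; 0, 0, 1, 0; 0, 0, 0, 1] *
        !![1, a, 0, 0; 0, -1, 0, 0; 0, 0, 0, -1; 0, 0, 1, -2]
    ext i j
    fin_cases i <;> fin_cases j <;>
      simp [Matrix.mul_apply, Fin.sum_univ_four, Matrix.vecHead, Matrix.vecTail]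
  · -- eigenvalue 1
    intro n m
    rcases Int.even_or_odd n with ⟨p, hp⟩ | ⟨p, hp⟩
    · refine det_zero_aux _ ![0, 0, 1, 1] (fun h => by simpa using congrFun h 2) ?_
      rw [Units.val_mul, ← mulVec_mulVec, fix_zpow U₂ _ g2 m, hp, negfix_even U₁ _ g1 p]
    · rcases Int.even_or_odd m with ⟨q, hq⟩ | ⟨q, hq⟩
      · refine det_zero_aux _ ![1, 0, 0, 0] (fun h => by simpa using congrFun h 0) ?_
        rw [Units.val_mul, ← mulVec_mulVec, hq, negfix_even U₂ _ f2 q,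
          fix_zpow U₁ _ f1 n]
      · refine det_zero_aux _ ![a, -2, 0, 0] (fun h => by simpa using congrFun h 1) ?_
        rw [Units.val_mul, ← mulVec_mulVec, hq, negfix_odd U₂ _ e2 q, mulVec_neg, hp,
          negfix_odd U₁ _ e1 p, neg_neg]
  · -- trivial fixed points
    intro k h1 h2
    replace h1 : (!![1, a, 0, 0; 0, -1, 0, 0; 0, 0, 0, -1; 0, 0, 1, -2] :
      Matrix (Fin 4) (Fin 4) ℤ).mulVec k = k := h1
    replace h2 : (!![-1, 0, 0, 0; 0, -1, 0, 0; 0, 0, 1, 0; 0, 0, 0, 1] :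
      Matrix (Fin 4) (Fin 4) ℤ).mulVec k = k := h2
    have a12 := congrFun h1 2
    have a13 := congrFun h1 3
    have a20 := congrFun h2 0
    have a21 := congrFun h2 1
    simp [Matrix.mulVec, dotProduct, Fin.sum_univ_four] at a12 a13 a20 a21
    funext i
    fin_cases i <;> simp <;> omega
  · -- not Klein four
    refine ⟨fun e => ?_⟩
    have hmem : U₁ ∈ Subgroup.closure ({U₁, U₂} : Set (GL (Fin 4) ℤ)) :=
      Subgroup.subset_closure (Set.mem_insert _ _)
    have hsq : ∀ y : Multiplicative (ZMod 2) × Multiplicative (ZMod 2), y * y = 1 := by decide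
    have hx2 : (⟨U₁, hmem⟩ * ⟨U₁, hmem⟩ :
        Subgroup.closure ({U₁, U₂} : Set (GL (Fin 4) ℤ))) = 1 := by
      apply e.injective
      rw [_root_.map_mul, _root_.map_one]
      exact hsq (e ⟨U₁, hmem⟩)
    have hU : U₁ * U₁ = 1 := congrArg Subtype.val hx2
    exact hfin (isOfFinOrder_iff_pow_eq_one.mpr ⟨2, by norm_num, by rw [pow_two, hU]⟩)
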